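/- Let A ∈ ℚ^{m×n} be rational, b ∈ ℝᵐ (not necessarily rational), P = {x : Ax ≥ b}, and let F be a face of P of the form F = P ∩ {x : αᵀx = β} for some integral α. Then for every t ∈ ℕ, the t-th Chvátal closure of F equals the intersection of the t-th Chvátal closure of P with F: F^{(t)} = P^{(t)} ∩ F. -/

import Mathlib

/-- The Chvátal closure of a set P ⊆ ℝⁿ: the intersection, over all inequalities
cᵀx ≥ d valid for P with c integral, of the halfspaces {x : cᵀx ≥ ⌈d⌉}. -/
def chvatalClosure {n : ℕ} (P : Set (Fin n → ℝ)) : Set (Fin n → ℝ) :=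
  {x | ∀ (c : Fin n → ℤ) (d : ℝ), (∀ y ∈ P, d ≤ ∑ i, (c i : ℝ) * y i) →
        (⌈d⌉ : ℝ) ≤ ∑ i, (c i : ℝ) * x i}

/-- The t-th iterated Chvátal closure. -/
def chvatalIter {n : ℕ} (t : ℕ) (P : Set (Fin n → ℝ)) : Set (Fin n → ℝ) :=
  chvatalClosure^[t] P


open Finset

namespace CGAux

/-- The finitely generated cone over the family `w`. -/
def coneSet {E : Type} [AddCommGroup E] [Module ℝ E] {ι : Type} [Fintype ι] (w : ι → E) : Set E :=
  {z | ∃ y : ι → ℝ, (∀ i, 0 ≤ y i) ∧ z = ∑ i, y i • w i}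

variable {E : Type} [AddCommGroup E] [Module ℝ E] {ι : Type} [Fintype ι]

lemma zero_mem_coneSet (w : ι → E) : (0 : E) ∈ coneSet w :=
  ⟨0, fun _ => le_refl 0, by simp⟩

lemma smul_mem_coneSet (w : ι → E) {z : E} (hz : z ∈ coneSet w) {s : ℝ} (hs : 0 ≤ s) :
    s • z ∈ coneSet w := by
  obtain ⟨y, hy, rfl⟩ := hz
  exact ⟨fun i => s * y i, fun i => mul_nonneg hs (hy i), by
    rw [Finset.smul_sum]; simp [smul_smul]⟩

lemma convex_coneSet (w : ι → E) : Convex ℝ (coneSet w) := by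
  rintro z₁ ⟨y₁, hy₁, rfl⟩ z₂ ⟨y₂, hy₂, rfl⟩ s t hs ht hst
  refine ⟨fun i => s * y₁ i + t * y₂ i,
    fun i => add_nonneg (mul_nonneg hs (hy₁ i)) (mul_nonneg ht (hy₂ i)), ?_⟩
  rw [Finset.smul_sum, Finset.smul_sum, ← Finset.sum_add_distrib]
  simp [add_smul, smul_smul]

/-- Conic Carathéodory: every element of a finitely generated cone is a nonnegative
combination supported on a linearly independent subfamily. -/
lemma caratheodory_cone (w : ι → E) :
    ∀ (N : ℕ) (y : ι → ℝ), (Finset.univ.filter (fun i => y i ≠ 0)).card ≤ N →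
      (∀ i, 0 ≤ y i) →
      ∃ (T : Finset ι) (y' : ι → ℝ), LinearIndependent ℝ (fun i : T => w i) ∧
        (∀ i, 0 ≤ y' i) ∧ (∀ i ∉ T, y' i = 0) ∧ ∑ i, y' i • w i = ∑ i, y i • w i := by
  intro N
  induction N with
  | zero =>
    intro y hcard hy
    have hzero : ∀ i, y i = 0 := by
      intro i
      by_contra h
      have : i ∈ Finset.univ.filter (fun i => y i ≠ 0) := by simp [h]
      have := Finset.card_pos.mpr ⟨i, this⟩
      omega
    refine ⟨∅, y, ?_, hy, fun i _ => hzero i, rfl⟩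
    have : IsEmpty ((∅ : Finset ι) : Type) := by
      simp [Finset.isEmpty_coe_sort]
      exact ⟨fun x => x.2⟩
    exact linearIndependent_empty_type
  | succ N ih =>
    intro y hcard hy
    set s := Finset.univ.filter (fun i => y i ≠ 0) with hs
    by_cases hli : LinearIndependent ℝ (fun i : s => w i)
    · refine ⟨s, y, hli, hy, ?_, rfl⟩
      intro i hi
      by_contra h
      exact hi (by simp [hs, h])
    · obtain ⟨g, hgsum, ⟨i₁, hi₁⟩⟩ := Fintype.not_linearIndependent_iff.mp hli
      classical
      set gh : ι → ℝ := fun i => if h : i ∈ s then g ⟨i, h⟩ else 0 with hgh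
      have hghsum : ∑ i, gh i • w i = 0 := by
        rw [← Finset.sum_subset (Finset.subset_univ s)
          (by intro i _ hi; simp [hgh, dif_neg hi])]
        rw [← Finset.sum_attach s (fun i => gh i • w i)]
        rw [← hgsum]
        refine Finset.sum_congr rfl ?_
        intro i _
        simp [hgh, dif_pos i.2]
      have hghsupp : ∀ i ∉ s, gh i = 0 := fun i hi => by simp [hgh, dif_neg hi]
      have hghne : ∃ i, gh i ≠ 0 := ⟨i₁, by simp [hgh, dif_pos i₁.2]; exact hi₁⟩
      -- sign-adjust
      obtain ⟨g₂, hg₂sum, hg₂supp, ⟨i₂, hi₂⟩⟩ :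
          ∃ g₂ : ι → ℝ, (∑ i, g₂ i • w i = 0) ∧ (∀ i ∉ s, g₂ i = 0) ∧ ∃ i, 0 < g₂ i := by
        by_cases hpos : ∃ i, 0 < gh i
        · exact ⟨gh, hghsum, hghsupp, hpos⟩
        · push_neg at hpos
          obtain ⟨i₀, hi₀⟩ := hghne
          refine ⟨-gh, by simpa using hghsum, fun i hi => by simp [hghsupp i hi], ⟨i₀, ?_⟩⟩
          simp only [Pi.neg_apply]
          have := hpos i₀
          cases lt_or_eq_of_le this with
          | inl h => linarith
          | inr h => exact absurd h hi₀
      set Sp := Finset.univ.filter (fun i => 0 < g₂ i) with hSp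
      have hSpne : Sp.Nonempty := ⟨i₂, by simp [hSp, hi₂]⟩
      obtain ⟨i₀, hi₀Sp, hi₀min⟩ := Sp.exists_min_image (fun i => y i / g₂ i) hSpne
      have hg₂i₀ : 0 < g₂ i₀ := by simpa [hSp] using hi₀Sp
      set t : ℝ := y i₀ / g₂ i₀ with ht
      have htnn : 0 ≤ t := div_nonneg (hy i₀) hg₂i₀.le
      set y' : ι → ℝ := fun i => y i - t * g₂ i with hy'
      have hy'nn : ∀ i, 0 ≤ y' i := by
        intro i
        by_cases hgi : 0 < g₂ i
        · have : t ≤ y i / g₂ i := hi₀min i (by simp [hSp, hgi])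
          have := (le_div_iff₀ hgi).mp this
          simp only [hy']; linarith
        · push_neg at hgi
          have : t * g₂ i ≤ 0 := mul_nonpos_of_nonneg_of_nonpos htnn hgi
          simp only [hy']; linarith [hy i]
      have hy'sum : ∑ i, y' i • w i = ∑ i, y i • w i := by
        simp only [hy', sub_smul, mul_smul]
        rw [Finset.sum_sub_distrib, ← Finset.smul_sum, hg₂sum, smul_zero, sub_zero]
      have hi₀s : i₀ ∈ s := by
        by_contra h
        exact absurd (hg₂supp i₀ h) (ne_of_gt hg₂i₀)
      have hy'supp : ∀ i ∉ s.erase i₀, y' i = 0 := by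
        intro i hi
        by_cases h : i = i₀
        · subst h
          simp only [hy', ht]
          field_simp
          ring
        · have his : i ∉ s := by
            intro hmem
            exact hi (Finset.mem_erase.mpr ⟨h, hmem⟩)
          have hyi : y i = 0 := by
            by_contra hyne
            exact his (by simp [hs, hyne])
          simp [hy', hyi, hg₂supp i his]
      have hcard' : (Finset.univ.filter (fun i => y' i ≠ 0)).card ≤ N := by
        have hsub : Finset.univ.filter (fun i => y' i ≠ 0) ⊆ s.erase i₀ := by
          intro i hi
          simp only [Finset.mem_filter] at hi
          by_contra h
          exact hi.2 (hy'supp i h)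
        calc (Finset.univ.filter (fun i => y' i ≠ 0)).card ≤ (s.erase i₀).card :=
              Finset.card_le_card hsub
          _ = s.card - 1 := Finset.card_erase_of_mem hi₀s
          _ ≤ N := by omega
      obtain ⟨T, y'', hli', hnn', hsupp', hsum'⟩ := ih y' hcard' hy'nn
      exact ⟨T, y'', hli', hnn', hsupp', by rw [hsum', hy'sum]⟩

lemma isClosed_coneSet {E : Type} [NormedAddCommGroup E] [NormedSpace ℝ E]
    [FiniteDimensional ℝ E] (w : ι → E) : IsClosed (coneSet w) := by
  classical
  have hdecomp : coneSet w = ⋃ (T : Finset ι),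
      ⋃ (_ : LinearIndependent ℝ (fun i : T => w i)),
        (fun y : T → ℝ => ∑ i : T, y i • w i) '' {y | ∀ i, 0 ≤ y i} := by
    ext z
    constructor
    · rintro ⟨y, hy, rfl⟩
      obtain ⟨T, y', hli, hnn, hsupp, hsum⟩ :=
        caratheodory_cone w (Finset.univ.filter (fun i => y i ≠ 0)).card y le_rfl hy
      refine Set.mem_iUnion.mpr ⟨T, Set.mem_iUnion.mpr ⟨hli, ⟨fun i => y' i, fun i => hnn i, ?_⟩⟩⟩
      show ∑ i : T, y' (i : ι) • w i = _
      rw [← hsum, Finset.sum_coe_sort T (fun i => y' i • w i)]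
      exact Finset.sum_subset (Finset.subset_univ T)
        (by intro i _ hi; rw [hsupp i hi, zero_smul])
    · intro hz
      obtain ⟨T, hT⟩ := Set.mem_iUnion.mp hz
      obtain ⟨hli, yT, hyT, rfl⟩ := Set.mem_iUnion.mp hT
      refine ⟨fun i => if h : i ∈ T then yT ⟨i, h⟩ else 0, fun i => ?_, ?_⟩
      · by_cases h : i ∈ T
        · simp only [dif_pos h]; exact hyT _
        · simp [dif_neg h]
      · rw [← Finset.sum_subset (Finset.subset_univ T)
          (by intro i _ hi; simp [dif_neg hi])]
        rw [← Finset.sum_attach T (fun i => (if h : i ∈ T then yT ⟨i, h⟩ else 0) • w i)]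
        refine Finset.sum_congr rfl ?_
        intro i _
        simp [dif_pos i.2]
  rw [hdecomp]
  apply isClosed_iUnion_of_finite
  intro T
  classical
  rw [Set.iUnion_eq_if]
  by_cases hli : LinearIndependent ℝ (fun i : T => w i)
  swap
  · simp [if_neg hli]
  rw [if_pos hli]
  · set φ : (T → ℝ) →ₗ[ℝ] E :=
      { toFun := fun y => ∑ i : T, y i • w i
        map_add' := by
          intro y₁ y₂
          rw [← Finset.sum_add_distrib]
          exact Finset.sum_congr rfl (fun i _ => add_smul _ _ _)
        map_smul' := by
          intro s y
          rw [RingHom.id_apply, Finset.smul_sum]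
          exact Finset.sum_congr rfl (fun i _ => (smul_smul s (y i) (w i)).symm) } with hφ
    have hker : LinearMap.ker φ = ⊥ := by
      rw [LinearMap.ker_eq_bot']
      intro y hy
      funext i
      exact Fintype.linearIndependent_iff.mp hli y hy i
    have hce := LinearMap.isClosedEmbedding_of_injective hker
    have horth : IsClosed {y : T → ℝ | ∀ i, 0 ≤ y i} := by
      have : {y : T → ℝ | ∀ i, 0 ≤ y i} = ⋂ i, {y : T → ℝ | 0 ≤ y i} :=
        Set.ext fun y => by simp
      rw [this]
      exact isClosed_iInter fun i => isClosed_le continuous_const (continuous_apply i)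
    exact hce.isClosedMap _ horth

variable {n : ℕ}

lemma dotswap {ι : Type} [Fintype ι] (y : ι → ℝ) (a : ι → Fin n → ℝ) (x : Fin n → ℝ) :
    ∑ j, (∑ i, y i * a i j) * x j = ∑ i, y i * ∑ j, a i j * x j := by
  simp_rw [Finset.sum_mul, Finset.mul_sum, ← mul_assoc]
  exact Finset.sum_comm

/-- Affine Farkas lemma over ℝ with dual attainment. -/
theorem farkas {ι : Type} [Fintype ι] (a : ι → Fin n → ℝ) (δ : ι → ℝ)
    (c : Fin n → ℝ) (d : ℝ)
    (hne : ∃ x : Fin n → ℝ, ∀ i, δ i ≤ ∑ j, a i j * x j)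
    (hval : ∀ x : Fin n → ℝ, (∀ i, δ i ≤ ∑ j, a i j * x j) → d ≤ ∑ j, c j * x j) :
    ∃ y : ι → ℝ, (∀ i, 0 ≤ y i) ∧ (∀ j, (∑ i, y i * a i j) = c j) ∧ d ≤ ∑ i, y i * δ i := by
  classical
  set w : Option ι → (Fin n → ℝ) × ℝ :=
    fun o => Option.elim o ((0 : Fin n → ℝ), (-1 : ℝ)) (fun i => (a i, δ i)) with hw
  have hmem : ((c, d) : (Fin n → ℝ) × ℝ) ∈ coneSet w := by
    by_contra hnot
    obtain ⟨f, u, hfs, hfp⟩ := geometric_hahn_banach_closed_point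
      (convex_coneSet w) (isClosed_coneSet w) hnot
    have hu0 : 0 < u := by
      have := hfs 0 (zero_mem_coneSet w)
      simpa using this
    have hknn : ∀ z ∈ coneSet w, f z ≤ 0 := by
      intro z hz
      by_contra h
      push_neg at h
      have hs : (0 : ℝ) ≤ (u + 1) / f z := div_nonneg (by linarith) h.le
      have := hfs _ (smul_mem_coneSet w hz hs)
      rw [map_smul, smul_eq_mul, div_mul_cancel₀ _ (ne_of_gt h)] at this
      linarith
    set q : Fin n → ℝ := fun j => f ((Pi.single j 1 : Fin n → ℝ), (0 : ℝ)) with hq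
    set e : ℝ := f ((0 : Fin n → ℝ), (1 : ℝ)) with he
    have hrep : ∀ (x : Fin n → ℝ) (t : ℝ), f (x, t) = (∑ j, x j * q j) + t * e := by
      intro x t
      have hxt : ((x, t) : (Fin n → ℝ) × ℝ) =
          (∑ j, x j • (((Pi.single j 1 : Fin n → ℝ), (0 : ℝ)) : (Fin n → ℝ) × ℝ))
            + t • (((0 : Fin n → ℝ), (1 : ℝ)) : (Fin n → ℝ) × ℝ) := by
        refine Prod.ext ?_ ?_
        · simp only [Prod.fst_add, Prod.fst_sum, Prod.smul_fst, Prod.smul_snd, smul_zero, add_zero]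
          rw [show (∑ j, x j • (Pi.single j (1:ℝ) : Fin n → ℝ)) = x from ?_]
          · funext k
            rw [Finset.sum_apply]
            simp [Pi.single_apply, mul_comm]
        · simp [Prod.snd_sum]
      rw [hxt, map_add, map_sum, map_smul]
      simp only [smul_eq_mul]
      congr 1
      exact Finset.sum_congr rfl (fun j _ => by rw [map_smul, smul_eq_mul])
    have hgen : ∀ o : Option ι, f (w o) ≤ 0 := by
      intro o
      refine hknn (w o) ⟨fun o' => if o' = o then 1 else 0, fun o' => by dsimp only; split <;> norm_num, ?_⟩
      simp [ite_smul]
    have hrow : ∀ i, (∑ j, a i j * q j) + δ i * e ≤ 0 := by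
      intro i
      have := hgen (some i)
      rw [hw] at this
      simpa [hrep] using this
    have hlast : 0 ≤ e := by
      have := hgen none
      rw [hw] at this
      simp only [Option.elim] at this
      rw [hrep] at this
      simp at this
      linarith
    have hp : 0 < (∑ j, c j * q j) + d * e := by
      have := hfp
      rw [hrep] at this
      linarith
    rcases lt_or_eq_of_le hlast with hepos | hezero
    · -- e > 0 : build a feasible point violating validity
      set xb : Fin n → ℝ := fun j => -q j / e with hxb
      have hfeas : ∀ i, δ i ≤ ∑ j, a i j * xb j := by
        intro i
        have h1 : (∑ j, a i j * xb j) * e = -(∑ j, a i j * q j) := by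
          rw [Finset.sum_mul, ← Finset.sum_neg_distrib]
          refine Finset.sum_congr rfl fun j _ => ?_
          simp only [hxb]
          field_simp
        have h2 : δ i * e ≤ (∑ j, a i j * xb j) * e := by
          rw [h1]; linarith [hrow i]
        exact le_of_mul_le_mul_right h2 hepos
      have hd := hval xb hfeas
      have h1 : (∑ j, c j * xb j) * e = -(∑ j, c j * q j) := by
        rw [Finset.sum_mul, ← Finset.sum_neg_distrib]
        refine Finset.sum_congr rfl fun j _ => ?_
        simp only [hxb]
        field_simp
      have h2 : d * e ≤ (∑ j, c j * xb j) * e :=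
        mul_le_mul_of_nonneg_right hd hepos.le
      rw [h1] at h2
      linarith
    · -- e = 0 : move from a feasible point along -q
      obtain ⟨x₀, hx₀⟩ := hne
      have hγpos : 0 < ∑ j, c j * q j := by
        rw [← hezero] at hp; linarith
      set s : ℝ := (∑ j, c j * x₀ j - d) / (∑ j, c j * q j) + 1 with hsdef
      have hs0 : 0 ≤ s := by
        have hd : d ≤ ∑ j, c j * x₀ j := hval x₀ hx₀
        have : 0 ≤ (∑ j, c j * x₀ j - d) / (∑ j, c j * q j) :=
          div_nonneg (by linarith) hγpos.le
        simp only [hsdef]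
        linarith
      set x₁ : Fin n → ℝ := fun j => x₀ j - s * q j with hx₁
      have hexpand : ∀ v : Fin n → ℝ,
          ∑ j, v j * x₁ j = (∑ j, v j * x₀ j) - s * ∑ j, v j * q j := by
        intro v
        rw [Finset.mul_sum, ← Finset.sum_sub_distrib]
        refine Finset.sum_congr rfl fun j _ => ?_
        simp only [hx₁]
        ring
      have hfeas : ∀ i, δ i ≤ ∑ j, a i j * x₁ j := by
        intro i
        rw [hexpand]
        have hrow' : ∑ j, a i j * q j ≤ 0 := by
          have := hrow i; rw [← hezero] at this; linarith
        nlinarith [hx₀ i, mul_nonneg hs0 (neg_nonneg.mpr hrow')]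
      have hval1 := hval x₁ hfeas
      rw [hexpand] at hval1
      have hmul : (∑ j, c j * x₀ j - d) / (∑ j, c j * q j) * (∑ j, c j * q j)
          = ∑ j, c j * x₀ j - d := div_mul_cancel₀ _ (ne_of_gt hγpos)
      simp only [hsdef] at hval1
      nlinarith
  obtain ⟨y, hy, hsum⟩ := hmem
  have h1 : c = ∑ o, (y o • w o).1 := by
    rw [← Prod.fst_sum, ← hsum]
  have h2 : d = ∑ o, (y o • w o).2 := by
    rw [← Prod.snd_sum, ← hsum]
  rw [Fintype.sum_option] at h1 h2
  simp only [hw, Option.elim, Prod.smul_fst, Prod.smul_snd,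
    smul_eq_mul, smul_zero, mul_neg, mul_one] at h1 h2
  refine ⟨fun i => y (some i), fun i => hy (some i), ?_, ?_⟩
  · intro j
    have h1j := congrFun h1 j
    rw [Pi.add_apply, Finset.sum_apply] at h1j
    simp only [Pi.smul_apply, smul_eq_mul, Pi.zero_apply, mul_zero, zero_add] at h1j
    exact h1j.symm
  · have : 0 ≤ y none := hy none
    rw [h2]
    linarith



section CG

variable {n : ℕ}

/-- Solution set of a finite system of linear inequalities with integer
left-hand sides and real right-hand sides. -/
def SolSet {ι : Type} [Fintype ι] (a : ι → Fin n → ℤ) (δ : ι → ℝ) : Set (Fin n → ℝ) :=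
  {x | ∀ i, δ i ≤ ∑ j, (a i j : ℝ) * x j}

lemma chvatalClosure_mono {P Q : Set (Fin n → ℝ)} (h : P ⊆ Q) :
    chvatalClosure P ⊆ chvatalClosure Q := by
  intro x hx c d hcd
  exact hx c d (fun y hy => hcd y (h hy))

lemma chvatalClosure_SolSet_subset {ι : Type} [Fintype ι] (a : ι → Fin n → ℤ) (δ : ι → ℝ) :
    chvatalClosure (SolSet a δ) ⊆ SolSet a δ := by
  intro x hx i
  have := hx (a i) (δ i) (fun y hy => hy i)
  calc δ i ≤ (⌈δ i⌉ : ℝ) := Int.le_ceil _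
    _ ≤ _ := this

/-- The Chvátal closure of such a system is again such a system. -/
lemma exists_SolSet_closure {ι : Type} [Fintype ι] (a : ι → Fin n → ℤ) (δ : ι → ℝ) :
    ∃ (κ : Type) (_ : Fintype κ) (a' : κ → Fin n → ℤ) (δ' : κ → ℝ),
      chvatalClosure (SolSet a δ) = SolSet a' δ' := by
  classical
  by_cases hne : (SolSet a δ).Nonempty
  swap
  · -- empty system
    refine ⟨Unit, inferInstance, fun _ => 0, fun _ => 1, ?_⟩
    have h1 : SolSet (fun _ : Unit => (0 : Fin n → ℤ)) (fun _ => (1:ℝ)) = ∅ := by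
      ext x
      simp [SolSet]
    have h2 : SolSet a δ = ∅ := Set.not_nonempty_iff_eq_empty.mp hne
    rw [h1, h2]
    ext x
    simp only [Set.mem_empty_iff_false, iff_false]
    intro hx
    have := hx 0 1 (fun y hy => absurd hy (by simp))
    simp at this
    linarith
  obtain ⟨x₀, hx₀⟩ := hne
  -- the finite candidate set of extra cut normals
  set M : Fin n → ℤ := fun j => ∑ i, |a i j| with hM
  set B : Finset (Fin n → ℤ) := Fintype.piFinset (fun j => Finset.Icc (-(M j)) (M j)) with hB
  set R : Finset (Fin n → ℤ) :=
    B.filter (fun r => BddBelow ((fun x => ∑ j, (r j : ℝ) * x j) '' SolSet a δ)) with hR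
  refine ⟨ι ⊕ {r // r ∈ R}, inferInstance,
    Sum.elim a (fun r => r.1),
    Sum.elim (fun i => (⌈δ i⌉ : ℝ))
      (fun r => ((⌈sInf ((fun x => ∑ j, (r.1 j : ℝ) * x j) '' SolSet a δ)⌉ : ℤ) : ℝ)), ?_⟩
  ext x
  constructor
  · -- closure ⊆ new system
    intro hx i
    cases i with
    | inl i =>
      simpa using hx (a i) (δ i) (fun y hy => hy i)
    | inr r =>
      have hbdd : BddBelow ((fun x => ∑ j, (r.1 j : ℝ) * x j) '' SolSet a δ) :=
        (Finset.mem_filter.mp r.2).2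
      have hvalid : ∀ y ∈ SolSet a δ,
          sInf ((fun x => ∑ j, (r.1 j : ℝ) * x j) '' SolSet a δ) ≤ ∑ j, (r.1 j : ℝ) * y j :=
        fun y hy => csInf_le hbdd ⟨y, hy, rfl⟩
      simpa using hx r.1 _ hvalid
  · -- new system ⊆ closure
    intro hx c d hcd
    set Q := SolSet a δ with hQ
    set opt := sInf ((fun x => ∑ j, (c j : ℝ) * x j) '' Q) with hopt
    have hbddc : BddBelow ((fun x => ∑ j, (c j : ℝ) * x j) '' Q) := by
      refine ⟨d, ?_⟩
      rintro v ⟨y, hy, rfl⟩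
      exact hcd y hy
    have hdopt : d ≤ opt := le_csInf ⟨_, ⟨x₀, hx₀, rfl⟩⟩ (by rintro v ⟨y, hy, rfl⟩; exact hcd y hy)
    -- Farkas for the bound opt
    obtain ⟨y, hy0, hyc, hyδ⟩ := farkas (fun i j => (a i j : ℝ)) δ (fun j => (c j : ℝ)) opt
      ⟨x₀, hx₀⟩ (fun z hz => csInf_le hbddc ⟨z, hz, rfl⟩)
    -- split the dual multipliers into integer and fractional parts
    set z : ι → ℤ := fun i => ⌊y i⌋ with hz
    have hz0 : ∀ i, 0 ≤ z i := fun i => Int.floor_nonneg.mpr (hy0 i)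
    set r : Fin n → ℤ := fun j => c j - ∑ i, z i * a i j with hr'
    have hrval : ∀ j, (r j : ℝ) = ∑ i, Int.fract (y i) * (a i j : ℝ) := by
      intro j
      have : (r j : ℝ) = (c j : ℝ) - ∑ i, (z i : ℝ) * (a i j : ℝ) := by
        simp only [hr']
        push_cast
        ring
      rw [this, ← hyc j, ← Finset.sum_sub_distrib]
      exact Finset.sum_congr rfl fun i _ => by rw [Int.fract]; ring
    have hrB : r ∈ B := by
      rw [hB, Fintype.mem_piFinset]
      intro j
      rw [Finset.mem_Icc, ← abs_le]
      have : |(r j : ℝ)| ≤ (M j : ℝ) := by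
        rw [hrval j, hM]
        push_cast
        calc |∑ i, Int.fract (y i) * (a i j : ℝ)| ≤ ∑ i, |Int.fract (y i) * (a i j : ℝ)| :=
              Finset.abs_sum_le_sum_abs _ _
          _ ≤ ∑ i, |(a i j : ℝ)| := by
              refine Finset.sum_le_sum fun i _ => ?_
              rw [abs_mul]
              have h1 : |Int.fract (y i)| ≤ 1 := by
                rw [abs_of_nonneg (Int.fract_nonneg _)]
                exact (Int.fract_lt_one _).le
              nlinarith [abs_nonneg ((a i j : ℝ))]
      exact_mod_cast this
    have hfras : ∀ x ∈ Q, ∑ i, Int.fract (y i) * δ i ≤ ∑ j, (r j : ℝ) * x j := by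
      intro w hw
      have : ∑ j, (r j : ℝ) * w j = ∑ i, Int.fract (y i) * ∑ j, (a i j : ℝ) * w j := by
        rw [← dotswap]
        exact Finset.sum_congr rfl fun j _ => by rw [hrval j]
      rw [this]
      exact Finset.sum_le_sum fun i _ => by
        have := hw i
        exact mul_le_mul_of_nonneg_left this (Int.fract_nonneg _)
    have hrbdd : BddBelow ((fun x => ∑ j, (r j : ℝ) * x j) '' Q) := by
      refine ⟨∑ i, Int.fract (y i) * δ i, ?_⟩
      rintro v ⟨w, hw, rfl⟩
      exact hfras w hw
    have hrR : r ∈ R := Finset.mem_filter.mpr ⟨hrB, hrbdd⟩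
    set ρ := sInf ((fun x => ∑ j, (r j : ℝ) * x j) '' Q) with hρ
    have hfρ : ∑ i, Int.fract (y i) * δ i ≤ ρ :=
      le_csInf ⟨_, ⟨x₀, hx₀, rfl⟩⟩ (by rintro v ⟨w, hw, rfl⟩; exact hfras w hw)
    -- the key chain of inequalities
    have hopt_le : opt ≤ (((∑ i, z i * ⌈δ i⌉ : ℤ) : ℝ)) + ρ := by
      have h1 : opt ≤ ∑ i, y i * δ i := hyδ
      have h2 : ∑ i, y i * δ i = (∑ i, (z i : ℝ) * δ i) + ∑ i, Int.fract (y i) * δ i := by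
        rw [← Finset.sum_add_distrib]
        exact Finset.sum_congr rfl fun i _ => by rw [Int.fract]; ring
      have h3 : ∑ i, (z i : ℝ) * δ i ≤ ∑ i, (z i : ℝ) * (⌈δ i⌉ : ℝ) :=
        Finset.sum_le_sum fun i _ => mul_le_mul_of_nonneg_left (Int.le_ceil _)
          (by exact_mod_cast hz0 i)
      have h4 : ((∑ i, z i * ⌈δ i⌉ : ℤ) : ℝ) = ∑ i, (z i : ℝ) * (⌈δ i⌉ : ℝ) := by push_cast; ring
      rw [h4]
      linarith
    have hceil : (⌈opt⌉ : ℤ) ≤ (∑ i, z i * ⌈δ i⌉) + ⌈ρ⌉ := by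
      calc ⌈opt⌉ ≤ ⌈(((∑ i, z i * ⌈δ i⌉ : ℤ) : ℝ)) + ρ⌉ := Int.ceil_le_ceil hopt_le
        _ = (∑ i, z i * ⌈δ i⌉) + ⌈ρ⌉ := by rw [add_comm, Int.ceil_add_intCast, add_comm]
    -- evaluate at x using the rows of the new system
    have hxrow : ∀ i : ι, ((⌈δ i⌉ : ℤ) : ℝ) ≤ ∑ j, (a i j : ℝ) * x j := fun i => by
      simpa using hx (Sum.inl i)
    have hxr : ((⌈ρ⌉ : ℤ) : ℝ) ≤ ∑ j, (r j : ℝ) * x j := by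
      simpa [hρ, hQ] using hx (Sum.inr ⟨r, hrR⟩)
    have hcx : ∑ j, (c j : ℝ) * x j
        = (∑ i, (z i : ℝ) * ∑ j, (a i j : ℝ) * x j) + ∑ j, (r j : ℝ) * x j := by
      rw [← dotswap, ← Finset.sum_add_distrib]
      refine Finset.sum_congr rfl fun j _ => ?_
      have : (c j : ℝ) = (∑ i, (z i : ℝ) * (a i j : ℝ)) + (r j : ℝ) := by
        simp only [hr']
        push_cast
        ring
      rw [this]
      ring
    have hfin : ((∑ i, z i * ⌈δ i⌉ : ℤ) : ℝ) + ((⌈ρ⌉ : ℤ) : ℝ) ≤ ∑ j, (c j : ℝ) * x j := by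
      rw [hcx]
      have h5 : ((∑ i, z i * ⌈δ i⌉ : ℤ) : ℝ) ≤ ∑ i, (z i : ℝ) * ∑ j, (a i j : ℝ) * x j := by
        have : ((∑ i, z i * ⌈δ i⌉ : ℤ) : ℝ) = ∑ i, (z i : ℝ) * ((⌈δ i⌉ : ℤ) : ℝ) := by
          push_cast; ring
        rw [this]
        exact Finset.sum_le_sum fun i _ => mul_le_mul_of_nonneg_left (hxrow i)
          (by exact_mod_cast hz0 i)
      linarith [hxr]
    have hdo : (⌈d⌉ : ℤ) ≤ ⌈opt⌉ := Int.ceil_le_ceil hdopt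
    have : ((⌈d⌉ : ℤ) : ℝ) ≤ ((∑ i, z i * ⌈δ i⌉ : ℤ) : ℝ) + ((⌈ρ⌉ : ℤ) : ℝ) := by
      have : ((⌈d⌉ : ℤ) : ℝ) ≤ (((∑ i, z i * ⌈δ i⌉) + ⌈ρ⌉ : ℤ) : ℝ) := by
        exact_mod_cast le_trans hdo hceil
      push_cast at this ⊢
      linarith
    linarith [hfin]

/-- Integerization of a rational system. -/
lemma exists_SolSet_of_rat {m n : ℕ} (A : Matrix (Fin m) (Fin n) ℚ) (b : Fin m → ℝ) :
    ∃ (a : Fin m → Fin n → ℤ) (δ : Fin m → ℝ),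
      {x : Fin n → ℝ | ∀ i, b i ≤ ∑ j, (A i j : ℝ) * x j} = SolSet a δ := by
  classical
  set D : Fin m → ℕ := fun i => ∏ j, (A i j).den with hD
  have hDpos : ∀ i, 0 < D i := fun i => Finset.prod_pos fun j _ => (A i j).pos
  set a : Fin m → Fin n → ℤ := fun i j => (A i j).num * ((D i : ℤ) / ((A i j).den : ℤ)) with ha
  have hkey : ∀ i j, ((a i j : ℤ) : ℚ) = A i j * (D i : ℚ) := by
    intro i j
    have hdvd : ((A i j).den : ℤ) ∣ (D i : ℤ) := by
      exact_mod_cast Int.natCast_dvd_natCast.mpr (Finset.dvd_prod_of_mem _ (Finset.mem_univ j))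
    obtain ⟨e, he⟩ := hdvd
    have hden0 : ((A i j).den : ℤ) ≠ 0 := by exact_mod_cast (A i j).pos.ne'
    have hdiv : (D i : ℤ) / ((A i j).den : ℤ) = e := by
      rw [he, Int.mul_ediv_cancel_left _ hden0]
    have hnum : (A i j) * ((A i j).den : ℚ) = ((A i j).num : ℚ) := by
      have hden : ((A i j).den : ℚ) ≠ 0 := by exact_mod_cast (A i j).pos.ne'
      have h := Rat.num_div_den (A i j)
      rw [div_eq_iff hden] at h
      exact h.symm
    calc ((a i j : ℤ) : ℚ) = ((A i j).num : ℚ) * (e : ℚ) := by rw [ha]; push_cast [hdiv]; ring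
      _ = (A i j) * (((A i j).den : ℚ) * (e : ℚ)) := by rw [← hnum]; ring
      _ = A i j * (D i : ℚ) := by
          congr 1
          exact_mod_cast he.symm
  refine ⟨a, fun i => (D i : ℝ) * b i, ?_⟩
  ext x
  simp only [SolSet, Set.mem_setOf_eq]
  refine forall_congr' fun i => ?_
  have hrow : ∑ j, (a i j : ℝ) * x j = (D i : ℝ) * ∑ j, (A i j : ℝ) * x j := by
    rw [Finset.mul_sum]
    refine Finset.sum_congr rfl fun j _ => ?_
    have : ((a i j : ℤ) : ℝ) = (A i j : ℝ) * (D i : ℝ) := by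
      have := hkey i j
      have h2 : (((a i j : ℤ) : ℚ) : ℝ) = ((A i j * (D i : ℚ) : ℚ) : ℝ) := by rw [this]
      push_cast at h2
      exact_mod_cast h2
    rw [this]
    ring
  rw [hrow]
  have hDR : (0 : ℝ) < (D i : ℝ) := by exact_mod_cast hDpos i
  constructor
  · intro h
    exact mul_le_mul_of_nonneg_left h hDR.le
  · intro h
    exact le_of_mul_le_mul_left h hDR

end CG

end CGAux

/-- for P = {x : Ax ≥ b} with A rational and b real, and a face
F = P ∩ {x : αᵀx = β} (α integral, αᵀx ≥ β valid for P), the t-th Chvátal closure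
of F equals the intersection of the t-th Chvátal closure of P with F. -/
theorem stmt7 {m n : ℕ} (A : Matrix (Fin m) (Fin n) ℚ) (b : Fin m → ℝ)
    (P F : Set (Fin n → ℝ))
    (hP : P = {x | ∀ i, b i ≤ ∑ j, (A i j : ℝ) * x j})
    (α : Fin n → ℤ) (β : ℝ)
    (hvalid : ∀ x ∈ P, β ≤ ∑ j, (α j : ℝ) * x j)
    (hF : F = P ∩ {x | ∑ j, (α j : ℝ) * x j = β}) :
    ∀ t : ℕ, chvatalIter t F = chvatalIter t P ∩ F := by
  -- main proof
  classical
  have hFP : F ⊆ P := by rw [hF]; exact Set.inter_subset_left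
  obtain ⟨a0, δ0, hrep0⟩ := CGAux.exists_SolSet_of_rat A b
  have hPrep : P = CGAux.SolSet a0 δ0 := by rw [hP, hrep0]
  suffices KEY : ∀ t : ℕ, (∃ (κ : Type) (_ : Fintype κ) (a : κ → Fin n → ℤ) (δ : κ → ℝ),
      chvatalIter t P = CGAux.SolSet a δ) ∧ chvatalIter t P ⊆ P ∧
      chvatalIter t F = chvatalIter t P ∩ F by
    exact fun t => (KEY t).2.2
  intro t
  induction t with
  | zero =>
    refine ⟨⟨Fin m, inferInstance, a0, δ0, by simpa [chvatalIter] using hPrep⟩,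
      by simp [chvatalIter], ?_⟩
    simp only [chvatalIter, Function.iterate_zero_apply]
    exact (Set.inter_eq_right.mpr hFP).symm
  | succ t ih =>
    obtain ⟨⟨κ, instκ, a, δ, hrept⟩, hPtP, hFt⟩ := ih
    have hsucc : chvatalIter (t+1) P = chvatalClosure (chvatalIter t P) := by
      simp [chvatalIter, Function.iterate_succ_apply']
    have hFsucc : chvatalIter (t+1) F = chvatalClosure (chvatalIter t F) := by
      simp [chvatalIter, Function.iterate_succ_apply']
    have hPsub : chvatalIter (t+1) P ⊆ chvatalIter t P := by
      rw [hsucc, hrept]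
      exact CGAux.chvatalClosure_SolSet_subset a δ
    -- the combined system for the face at level t
    set at' : κ ⊕ Bool → Fin n → ℤ := Sum.elim a (fun s => if s then α else -α) with hat
    set δt : κ ⊕ Bool → ℝ := Sum.elim δ (fun s => if s then β else -β) with hδt
    have hGrep : CGAux.SolSet at' δt = chvatalIter t P ∩ F := by
      ext w
      simp only [CGAux.SolSet, Set.mem_setOf_eq, Set.mem_inter_iff]
      constructor
      · intro h
        have hwP : w ∈ chvatalIter t P := by
          rw [hrept]
          exact fun i => h (Sum.inl i)
        have h1 : β ≤ ∑ j, (α j : ℝ) * w j := by simpa [hat, hδt] using h (Sum.inr true)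
        have h2 : -β ≤ ∑ j, (-(α j : ℝ)) * w j := by
          have := h (Sum.inr false)
          simpa [hat, hδt] using this
        have h2' : ∑ j, (α j : ℝ) * w j ≤ β := by
          have : ∑ j, (-(α j : ℝ)) * w j = -∑ j, (α j : ℝ) * w j := by
            rw [← Finset.sum_neg_distrib]
            exact Finset.sum_congr rfl fun j _ => by ring
          rw [this] at h2
          linarith
        refine ⟨hwP, ?_⟩
        rw [hF]
        exact ⟨hPtP hwP, le_antisymm h2' h1⟩
      · rintro ⟨hwP, hwF⟩
        have hweq : ∑ j, (α j : ℝ) * w j = β := by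
          rw [hF] at hwF
          exact hwF.2
        intro i
        cases i with
        | inl i =>
          rw [hrept] at hwP
          exact hwP i
        | inr s =>
          cases s with
          | true => simp [hat, hδt, hweq]
          | false =>
            simp only [hat, hδt, Sum.elim_inr, Bool.false_eq_true, if_false]
            have : ∑ j, ((-α : Fin n → ℤ) j : ℝ) * w j = -∑ j, (α j : ℝ) * w j := by
              rw [← Finset.sum_neg_distrib]
              refine Finset.sum_congr rfl fun j _ => by rw [Pi.neg_apply]; push_cast; ring
            rw [this, hweq]
    refine ⟨?_, ?_, ?_⟩
    · -- representation of the (t+1)-st closure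
      rw [hsucc, hrept]
      exact CGAux.exists_SolSet_closure a δ
    · exact fun x hx => hPtP (hPsub hx)
    · -- the main equality at level t+1
      apply Set.Subset.antisymm
      · intro x hx
        constructor
        · rw [hsucc]
          rw [hFsucc] at hx
          exact CGAux.chvatalClosure_mono (by rw [hFt]; exact Set.inter_subset_left) hx
        · rw [hFsucc, hFt, ← hGrep] at hx
          have := CGAux.chvatalClosure_SolSet_subset at' δt hx
          rw [hGrep] at this
          exact this.2
      · rintro x ⟨hxP1, hxF⟩
        have hxPt : x ∈ chvatalIter t P := hPsub hxP1
        have hx1 : x ∈ chvatalClosure (chvatalIter t P) := by rw [← hsucc]; exact hxP1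
        have hxFeq : ∑ j, (α j : ℝ) * x j = β := by
          rw [hF] at hxF
          exact hxF.2
        rw [hFsucc]
        intro c d hcd
        rw [hFt, ← hGrep] at hcd
        by_cases hβ : ∃ B : ℤ, β = (B : ℝ)
        · obtain ⟨B, hB⟩ := hβ
          have hGne : (CGAux.SolSet at' δt).Nonempty := ⟨x, by rw [hGrep]; exact ⟨hxPt, hxF⟩⟩
          obtain ⟨x₁, hx₁⟩ := hGne
          obtain ⟨y, hy0, hyc, hyδ⟩ := CGAux.farkas (fun i j => ((at' i j : ℤ) : ℝ)) δt
            (fun j => (c j : ℝ)) d ⟨x₁, hx₁⟩ (fun z hz => hcd z hz)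
          set lam : ℝ := y (Sum.inr true) - y (Sum.inr false) with hlam
          set μ : ℤ := max 0 ⌈-lam⌉ with hμ
          have hμ0 : (0 : ℤ) ≤ μ := le_max_left _ _
          have hlamμ : 0 ≤ lam + (μ : ℝ) := by
            have h1 : -lam ≤ (⌈-lam⌉ : ℝ) := Int.le_ceil _
            have h2 : ((⌈-lam⌉ : ℤ) : ℝ) ≤ (μ : ℝ) := by exact_mod_cast le_max_right _ _
            linarith
          set c' : Fin n → ℤ := fun j => c j + μ * α j with hc'
          -- the lifted cut is valid for the t-th closure of P
          have hcut : ∀ w ∈ chvatalIter t P, d + (μ : ℝ) * β ≤ ∑ j, (c' j : ℝ) * w j := by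
            intro w hw
            have hwS : ∀ i, δ i ≤ ∑ j, (a i j : ℝ) * w j := by
              rw [hrept] at hw
              exact hw
            have hαw : β ≤ ∑ j, (α j : ℝ) * w j := hvalid w (hPtP hw)
            have hexp : ∑ j, (c' j : ℝ) * w j
                = (∑ i, y i * ∑ j, ((at' i j : ℤ) : ℝ) * w j) + (μ : ℝ) * ∑ j, (α j : ℝ) * w j := by
              rw [← CGAux.dotswap y (fun i j => ((at' i j : ℤ) : ℝ)) w, Finset.mul_sum,
                ← Finset.sum_add_distrib]
              refine Finset.sum_congr rfl fun j _ => ?_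
              rw [hyc j]
              have : ((c' j : ℤ) : ℝ) = (c j : ℝ) + (μ : ℝ) * (α j : ℝ) := by
                rw [hc']; push_cast; ring
              rw [this]
              ring
            have hsplit : ∑ i, y i * ∑ j, ((at' i j : ℤ) : ℝ) * w j
                = (∑ i : κ, y (Sum.inl i) * ∑ j, (a i j : ℝ) * w j)
                  + lam * ∑ j, (α j : ℝ) * w j := by
              rw [Fintype.sum_sum_type]
              congr 1
              rw [Fintype.sum_bool]
              have ht : ∀ j, ((at' (Sum.inr true) j : ℤ) : ℝ) = (α j : ℝ) := fun j => by
                simp [hat]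
              have hf : ∀ j, ((at' (Sum.inr false) j : ℤ) : ℝ) = -(α j : ℝ) := fun j => by
                simp [hat]
              have h1 : ∑ j, ((at' (Sum.inr true) j : ℤ) : ℝ) * w j = ∑ j, (α j : ℝ) * w j :=
                Finset.sum_congr rfl fun j _ => by rw [ht j]
              have h2 : ∑ j, ((at' (Sum.inr false) j : ℤ) : ℝ) * w j
                  = -∑ j, (α j : ℝ) * w j := by
                rw [← Finset.sum_neg_distrib]
                exact Finset.sum_congr rfl fun j _ => by rw [hf j]; ring
              rw [h1, h2, hlam]
              ring
            have hterm1 : ∑ i : κ, y (Sum.inl i) * δ i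
                ≤ ∑ i : κ, y (Sum.inl i) * ∑ j, (a i j : ℝ) * w j :=
              Finset.sum_le_sum fun i _ => mul_le_mul_of_nonneg_left (hwS i) (hy0 _)
            have hterm2 : (lam + (μ : ℝ)) * β ≤ (lam + (μ : ℝ)) * ∑ j, (α j : ℝ) * w j :=
              mul_le_mul_of_nonneg_left hαw hlamμ
            have hδsplit : ∑ i, y i * δt i
                = (∑ i : κ, y (Sum.inl i) * δ i) + lam * β := by
              rw [Fintype.sum_sum_type, Fintype.sum_bool]
              simp only [hδt, Sum.elim_inl, Sum.elim_inr, Bool.false_eq_true, if_false,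
                if_true, ite_true, hlam]
              ring
            have hd : d ≤ ∑ i, y i * δt i := hyδ
            rw [hexp, hsplit]
            rw [hδsplit] at hd
            nlinarith [hterm1, hterm2]
          have hcx := hx1 c' (d + (μ : ℝ) * β) hcut
          have hceil : (⌈d + (μ : ℝ) * β⌉ : ℤ) = ⌈d⌉ + μ * B := by
            rw [hB]
            rw [show ((μ : ℝ) * (B : ℝ)) = ((μ * B : ℤ) : ℝ) by push_cast; ring]
            exact Int.ceil_add_intCast d (μ * B)
          have hc'x : ∑ j, (c' j : ℝ) * x j
              = (∑ j, (c j : ℝ) * x j) + (μ : ℝ) * β := by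
            rw [← hxFeq, Finset.mul_sum, ← Finset.sum_add_distrib]
            refine Finset.sum_congr rfl fun j _ => ?_
            have : ((c' j : ℤ) : ℝ) = (c j : ℝ) + (μ : ℝ) * (α j : ℝ) := by
              rw [hc']; push_cast; ring
            rw [this]
            ring
          rw [hceil] at hcx
          rw [hc'x] at hcx
          have : ((⌈d⌉ : ℤ) : ℝ) + (μ : ℝ) * (B : ℝ) ≤ (∑ j, (c j : ℝ) * x j) + (μ : ℝ) * β := by
            calc ((⌈d⌉ : ℤ) : ℝ) + (μ : ℝ) * (B : ℝ) = ((⌈d⌉ + μ * B : ℤ) : ℝ) := by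
                  push_cast; ring
              _ ≤ _ := hcx
          rw [hB] at this
          linarith
        · -- β is not an integer: contradiction
          exfalso
          have hvα : ∀ w ∈ chvatalIter t P, β ≤ ∑ j, (α j : ℝ) * w j :=
            fun w hw => hvalid w (hPtP hw)
          have h1 := hx1 α β hvα
          rw [hxFeq] at h1
          exact hβ ⟨⌈β⌉, le_antisymm (Int.le_ceil β) h1⟩
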